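/- Let A and B be two bases of a matroid M on a finite ground set N. Then there exists a bijection h : A ∖ B → B ∖ A such that for every u ∈ A ∖ B, the set (B ∖ {h(u)}) ∪ {u} is independent in M. -/
import Mathlib


open scoped Classical

/-- A matroid on a finite ground set, given by its independent sets. -/
structure FinMatroid (α : Type*) [Fintype α] [DecidableEq α] where
  Indep : Finset α → Prop
  indep_empty : Indep ∅
  indep_subset : ∀ ⦃S T : Finset α⦄, Indep T → S ⊆ T → Indep S
  indep_exchange : ∀ ⦃S T : Finset α⦄, Indep S → Indep T → S.card < T.card →
    ∃ u ∈ T \ S, Indep (insert u S)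

variable {α : Type*} [Fintype α] [DecidableEq α]

/-- The rank of a set `A`: the maximum size of an independent subset of `A`. -/
noncomputable def FinMatroid.rank (M : FinMatroid α) (A : Finset α) : ℕ :=
  (A.powerset.filter fun S => M.Indep S).sup Finset.card

/-- A base of a matroid: an inclusion-wise maximal independent set. -/
def FinMatroid.IsBase (M : FinMatroid α) (B : Finset α) : Prop :=
  M.Indep B ∧ ∀ T : Finset α, M.Indep T → B ⊆ T → T = B

/-- The extended multilinear extension of a set function `f`, evaluated at a
vector `y` with one coordinate for each subset of the ground set. -/
noncomputable def extMulti (f : Finset α → ℝ) (y : Finset α → ℝ) : ℝ :=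
  ∑ J : Finset (Finset α), f (J.sup id) * ((∏ S ∈ J, y S) * ∏ S ∈ Jᶜ, (1 - y S))

/-- The standard multilinear extension of a set function `f`. -/
noncomputable def stdMulti (f : Finset α → ℝ) (x : α → ℝ) : ℝ :=
  ∑ S : Finset α, f S * ((∏ u ∈ S, x u) * ∏ u ∈ Sᶜ, (1 - x u))

/-- The marginal vector of `y`: `marg y u = 1 - ∏_{S ∋ u} (1 - y S)`. -/
noncomputable def marg (y : Finset α → ℝ) (u : α) : ℝ :=
  1 - ∏ S ∈ Finset.univ.filter (fun S : Finset α => u ∈ S), (1 - y S)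

/-- The characteristic vector of the coordinate indexed by the set `A`. -/
def chi (A : Finset α) : Finset α → ℝ := fun S => if S = A then 1 else 0

/-- The coordinate-wise probabilistic sum of two vectors. -/
def psum {ι : Type*} (a b : ι → ℝ) : ι → ℝ := fun i => 1 - (1 - a i) * (1 - b i)

/-- Membership of `x` in the matroid polytope `P(M)`. -/
def inMatroidPolytope (M : FinMatroid α) (x : α → ℝ) : Prop :=
  (∀ u, 0 ≤ x u) ∧ ∀ A : Finset α, ∑ u ∈ A, x u ≤ (M.rank A : ℝ)

namespace FinMatroid
variable {M : FinMatroid α}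

lemma le_rank_of_indep {I S : Finset α} (hI : M.Indep I) (hIS : I ⊆ S) :
    I.card ≤ M.rank S :=
  Finset.le_sup (by simp [Finset.mem_filter, Finset.mem_powerset, hI, hIS])

lemma exists_max_indep (M : FinMatroid α) (S : Finset α) :
    ∃ I, M.Indep I ∧ I ⊆ S ∧ I.card = M.rank S := by
  obtain ⟨I, hI, h⟩ := Finset.exists_mem_eq_sup (S.powerset.filter fun S => M.Indep S)
    ⟨∅, by simp [M.indep_empty]⟩ Finset.card
  simp only [Finset.mem_filter, Finset.mem_powerset] at hI
  exact ⟨I, hI.2, hI.1, h.symm⟩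

lemma exchange_in {I S : Finset α} (hI : M.Indep I) (hIS : I ⊆ S)
    (h : I.card < M.rank S) : ∃ u ∈ S \ I, M.Indep (insert u I) := by
  obtain ⟨J, hJ, hJS, hJc⟩ := M.exists_max_indep S
  obtain ⟨u, hu, hind⟩ := M.indep_exchange hI hJ (hJc ▸ h)
  rw [Finset.mem_sdiff] at hu
  exact ⟨u, Finset.mem_sdiff.2 ⟨hJS hu.1, hu.2⟩, hind⟩

lemma card_le_of_base {B K : Finset α} (hB : M.IsBase B) (hK : M.Indep K) :
    K.card ≤ B.card := by
  by_contra h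
  obtain ⟨w, hw, hind⟩ := M.indep_exchange hB.1 hK (lt_of_not_ge h)
  rw [Finset.mem_sdiff] at hw
  have := hB.2 _ hind (Finset.subset_insert _ _)
  exact hw.2 (this ▸ Finset.mem_insert_self w B)

/-- extend an independent set to one of card `B.card` inside `J ∪ B`. -/
lemma extend {B : Finset α} (hB : M.Indep B) :
    ∀ n (J : Finset α), M.Indep J → J.card + n = B.card →
      ∃ J', M.Indep J' ∧ J ⊆ J' ∧ J' ⊆ J ∪ B ∧ J'.card = B.card := by
  intro n
  induction n with
  | zero => exact fun J hJ hc => ⟨J, hJ, le_refl _, Finset.subset_union_left, by simpa using hc⟩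
  | succ n ih =>
    intro J hJ hc
    obtain ⟨u, hu, hind⟩ := M.indep_exchange hJ hB (by omega)
    rw [Finset.mem_sdiff] at hu
    obtain ⟨J', h1, h2, h3, h4⟩ := ih (insert u J) hind
      (by rw [Finset.card_insert_of_notMem hu.2]; omega)
    refine ⟨J', h1, (Finset.subset_insert _ _).trans h2, h3.trans ?_, h4⟩
    intro x hx
    rcases Finset.mem_union.1 hx with hx | hx
    · rcases Finset.mem_insert.1 hx with rfl | hx
      · exact Finset.mem_union_right _ hu.1
      · exact Finset.mem_union_left _ hx
    · exact Finset.mem_union_right _ hx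

end FinMatroid

theorem base_exchange_bijection (M : FinMatroid α) (A B : Finset α)
    (hA : M.IsBase A) (hB : M.IsBase B) :
    ∃ h : α → α, Set.BijOn h ↑(A \ B) ↑(B \ A) ∧
      ∀ u ∈ A \ B, M.Indep (insert u (B.erase (h u))) := by
  classical
  -- neighborhood
  set N : α → Finset α := fun u => (B \ A).filter fun v => M.Indep (insert u (B.erase v)) with hN
  have hcard : A.card = B.card :=
    le_antisymm (M.card_le_of_base hB hA.1) (M.card_le_of_base hA hB.1)
  -- key dependency: for u ∈ A \ B, insert u ((A ∩ B) ∪ N u) is dependent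
  have key : ∀ u ∈ A \ B, ¬ M.Indep (insert u ((A ∩ B) ∪ N u)) := by
    intro u hu hind
    rw [Finset.mem_sdiff] at hu
    have hYB : (A ∩ B) ∪ N u ⊆ B := by
      intro x hx
      rcases Finset.mem_union.1 hx with hx | hx
      · exact (Finset.mem_inter.1 hx).2
      · exact (Finset.mem_sdiff.1 (Finset.mem_filter.1 hx).1).1
    have hle : (insert u ((A ∩ B) ∪ N u)).card ≤ B.card := M.card_le_of_base hB hind
    obtain ⟨J', hJ'i, hJ'1, hJ'2, hJ'c⟩ := FinMatroid.extend hB.1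
      (B.card - (insert u ((A ∩ B) ∪ N u)).card) _ hind (by omega)
    have huJ' : u ∈ J' := hJ'1 (Finset.mem_insert_self _ _)
    have hJ'sub : J' ⊆ insert u B := by
      intro x hx
      rcases Finset.mem_union.1 (hJ'2 hx) with hx | hx
      · rcases Finset.mem_insert.1 hx with rfl | hx
        · exact Finset.mem_insert_self _ _
        · exact Finset.mem_insert_of_mem (hYB hx)
      · exact Finset.mem_insert_of_mem hx
    -- there is v ∈ B \ J'
    have hBnotsub : ¬ B ⊆ J' := by
      intro hsub
      have : B = J' := Finset.eq_of_subset_of_card_le hsub (le_of_eq hJ'c)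
      exact hu.2 (this ▸ huJ')
    obtain ⟨v, hvB, hvJ'⟩ := Finset.not_subset.1 hBnotsub
    have hvu : v ≠ u := fun h => hvJ' (h ▸ huJ')
    have hsub : J' ⊆ insert u (B.erase v) := by
      intro x hx
      rcases Finset.mem_insert.1 (hJ'sub hx) with rfl | hx2
      · exact Finset.mem_insert_self _ _
      · exact Finset.mem_insert_of_mem (Finset.mem_erase.2 ⟨fun h => hvJ' (h ▸ hx), hx2⟩)
    have hKcard : (insert u (B.erase v)).card = B.card := by
      rw [Finset.card_insert_of_notMem (fun h => hu.2 (Finset.mem_of_mem_erase h)),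
        Finset.card_erase_of_mem hvB]
      have := Finset.card_pos.2 ⟨v, hvB⟩
      omega
    have heq : J' = insert u (B.erase v) :=
      Finset.eq_of_subset_of_card_le hsub (by omega)
    have hindv : M.Indep (insert u (B.erase v)) := heq ▸ hJ'i
    -- then v ∈ N u ∪ (A ∩ B) ⊆ J', contradiction
    have hvNA : v ∈ (A ∩ B) ∪ N u := by
      by_cases hvA : v ∈ A
      · exact Finset.mem_union_left _ (Finset.mem_inter.2 ⟨hvA, hvB⟩)
      · exact Finset.mem_union_right _
          (Finset.mem_filter.2 ⟨Finset.mem_sdiff.2 ⟨hvB, hvA⟩, hindv⟩)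
    exact hvJ' (hJ'1 (Finset.mem_insert_of_mem hvNA))
  -- Hall condition
  have hall : ∀ X : Finset α, X ⊆ A \ B → X.card ≤ (X.biUnion N).card := by
    intro X hX
    set NX := X.biUnion N with hNX
    have hNXBA : NX ⊆ B \ A := fun v hv => by
      obtain ⟨u, _, hv⟩ := Finset.mem_biUnion.1 hv
      exact (Finset.mem_filter.1 hv).1
    set Y := (A ∩ B) ∪ NX with hY
    have hYB : Y ⊆ B := by
      intro x hx
      rcases Finset.mem_union.1 hx with hx | hx
      · exact (Finset.mem_inter.1 hx).2
      · exact (Finset.mem_sdiff.1 (hNXBA hx)).1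
    have hYind : M.Indep Y := M.indep_subset hB.1 hYB
    -- rank (X ∪ Y) ≤ Y.card
    have hrank : M.rank (X ∪ Y) ≤ Y.card := by
      by_contra hlt
      obtain ⟨w, hw, hwind⟩ := FinMatroid.exchange_in hYind Finset.subset_union_right
        (lt_of_not_ge hlt)
      rw [Finset.mem_sdiff, Finset.mem_union] at hw
      have hwX : w ∈ X := hw.1.resolve_right hw.2
      apply key w (hX hwX)
      apply M.indep_subset hwind
      apply Finset.insert_subset_insert
      apply Finset.union_subset Finset.subset_union_left
      intro v hv
      exact Finset.mem_union_right _ (Finset.mem_biUnion.2 ⟨w, hwX, hv⟩)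
    -- X ∪ (A ∩ B) is independent subset of X ∪ Y
    have hXA : X ∪ (A ∩ B) ⊆ A := Finset.union_subset
      (fun x hx => (Finset.mem_sdiff.1 (hX hx)).1) Finset.inter_subset_left
    have h1 : (X ∪ (A ∩ B)).card ≤ M.rank (X ∪ Y) :=
      FinMatroid.le_rank_of_indep (M.indep_subset hA.1 hXA)
        (Finset.union_subset Finset.subset_union_left
          (fun x hx => Finset.mem_union_right _ (Finset.mem_union_left _ hx)))
    have hdisj1 : Disjoint X (A ∩ B) := by
      rw [Finset.disjoint_left]
      intro x hx hx2
      exact (Finset.mem_sdiff.1 (hX hx)).2 (Finset.mem_inter.1 hx2).2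
    have hdisj2 : Disjoint (A ∩ B) NX := by
      rw [Finset.disjoint_left]
      intro x hx hx2
      exact (Finset.mem_sdiff.1 (hNXBA hx2)).2 (Finset.mem_inter.1 hx).1
    rw [Finset.card_union_of_disjoint hdisj1] at h1
    rw [hY] at h1
    rw [hY, Finset.card_union_of_disjoint hdisj2] at hrank
    omega
  -- apply Hall's theorem
  have hallcond : ∀ s : Finset {u // u ∈ A \ B},
      s.card ≤ (s.biUnion fun u => N u.1).card := by
    intro s
    have : s.card = (s.image Subtype.val).card :=
      (Finset.card_image_of_injective _ Subtype.val_injective).symm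
    rw [this]
    refine le_trans (hall _ ?_) (Finset.card_le_card ?_)
    · intro x hx
      obtain ⟨u, _, rfl⟩ := Finset.mem_image.1 hx
      exact u.2
    · intro v hv
      obtain ⟨u, hu, hv⟩ := Finset.mem_biUnion.1 hv
      obtain ⟨w, hw, rfl⟩ := Finset.mem_image.1 hu
      exact Finset.mem_biUnion.2 ⟨w, hw, hv⟩
  obtain ⟨f, hfinj, hfmem⟩ := (Finset.all_card_le_biUnion_card_iff_exists_injective
    (fun u : {u // u ∈ A \ B} => N u.1)).1 hallcond
  -- build the bijection
  set h : α → α := fun u => if hu : u ∈ A \ B then f ⟨u, hu⟩ else u with hh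
  have hmem : ∀ u, ∀ hu : u ∈ A \ B, h u ∈ N u := fun u hu => by
    simp only [hh, dif_pos hu]; exact hfmem ⟨u, hu⟩
  have hmaps : ∀ u ∈ A \ B, h u ∈ B \ A := fun u hu => (Finset.mem_filter.1 (hmem u hu)).1
  have hinj : Set.InjOn h ↑(A \ B) := by
    intro x hx y hy hxy
    rw [Finset.mem_coe] at hx hy
    simp only [hh, dif_pos hx, dif_pos hy] at hxy
    exact congrArg Subtype.val (hfinj hxy)
  have himg : (A \ B).image h = B \ A := by
    apply Finset.eq_of_subset_of_card_le
    · intro v hv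
      obtain ⟨u, hu, rfl⟩ := Finset.mem_image.1 hv
      exact hmaps u hu
    · rw [Finset.card_image_of_injOn hinj]
      have h1 := Finset.card_sdiff_add_card_inter A B
      have h2 := Finset.card_sdiff_add_card_inter B A
      rw [Finset.inter_comm] at h2
      omega
  refine ⟨h, ⟨fun u hu => ?_, hinj, ?_⟩, fun u hu => ?_⟩
  · exact Finset.mem_coe.2 (hmaps u (Finset.mem_coe.1 hu))
  · have : (↑(B \ A) : Set α) = h '' ↑(A \ B) := by rw [← himg, Finset.coe_image]
    exact this.le
  · exact (Finset.mem_filter.1 (hmem u hu)).2
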